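/- Let (A, m) be a local ring with m nilpotent, residue field K = A/m, and let x(t), y(t) be tuples of power series in A[[t]] (of lengths n and m respectively) with f(x(t), y(t)) = 0 for polynomials f = (f₁,...,f_m) ∈ k[x,y]^m. Let δ = det(∂f_i/∂y_j). Suppose δ(x(t),y(t)) = q(t)u(t) with q a Weierstrass polynomial of degree d and u a unit in A[[t]]. Write y(t) = ȳ(t) + q(t)θ(t) with deg ȳ < d, and x(t) = x̄(t) + q(t)²ξ(t) with deg x̄ < 2d. Then Ad(Df(x̄(t),ȳ(t)))·f(x̄(t),ȳ(t)) ∈ q(t)²·A[t]^m and δ(x̄(t),ȳ(t)) ∈ q(t)·A[t], where Ad denotes the adjugate matrix and Df = (∂f_i/∂y_j). -/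

import Mathlib

open IsLocalRing Polynomial MvPolynomial

/-- A Weierstrass polynomial of degree `d` over a local ring. -/
def IsWeierstrassPolynomial {A : Type*} [CommRing A] [IsLocalRing A]
    (q : Polynomial A) (d : ℕ) : Prop :=
  q.Monic ∧ q.natDegree = d ∧ ∀ i < d, q.coeff i ∈ maximalIdeal A


/-- If `q` is monic of degree `D` with lower coefficients in a nilpotent ideal `I`,
and `q * h` is a polynomial of degree `< D` for a power series `h`, then `h = 0`. -/
lemma weier_mul_eq_small_poly {A : Type*} [CommRing A] {I : Ideal A} {N : ℕ}
    (hN : I ^ N = ⊥) {q : Polynomial A} {D : ℕ} (hm : q.Monic) (hd : q.natDegree = D)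
    (hlow : ∀ i < D, q.coeff i ∈ I) {h : PowerSeries A} {r : Polynomial A}
    (hr : r.degree < (D : ℕ)) (heq : (q : PowerSeries A) * h = (r : PowerSeries A)) :
    h = 0 := by
  have key : ∀ j : ℕ, ∀ m : ℕ, PowerSeries.coeff m h ∈ I ^ j := by
    intro j
    induction j with
    | zero => intro m; simp
    | succ j ih =>
      intro m
      have h0 : PowerSeries.coeff (D + m) ((q : PowerSeries A) * h) = 0 := by
        rw [heq, Polynomial.coeff_coe]
        exact Polynomial.coeff_eq_zero_of_degree_lt
          (lt_of_lt_of_le hr (by exact_mod_cast Nat.le_add_right D m))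
      rw [PowerSeries.coeff_mul] at h0
      have hmem : (D, m) ∈ Finset.HasAntidiagonal.antidiagonal (D + m) := by simp
      rw [← Finset.add_sum_erase _ _ hmem] at h0
      have hqD : PowerSeries.coeff D (q : PowerSeries A) = 1 := by
        rw [Polynomial.coeff_coe, ← hd]; exact hm.coeff_natDegree
      rw [hqD, one_mul] at h0
      have hrest : ∑ p ∈ (Finset.HasAntidiagonal.antidiagonal (D + m)).erase (D, m),
          PowerSeries.coeff p.1 (q : PowerSeries A) * PowerSeries.coeff p.2 h
          ∈ I ^ (j + 1) := by
        apply Ideal.sum_mem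
        intro p hp
        rw [Finset.mem_erase, Finset.HasAntidiagonal.mem_antidiagonal] at hp
        rw [Polynomial.coeff_coe]
        rcases lt_trichotomy p.1 D with hlt | heqD | hgt
        · rw [pow_succ']
          exact Ideal.mul_mem_mul (hlow p.1 hlt) (ih p.2)
        · exfalso; apply hp.1
          have : p.2 = m := by omega
          exact Prod.ext heqD this
        · have : q.coeff p.1 = 0 :=
            Polynomial.coeff_eq_zero_of_natDegree_lt (by omega)
          rw [this, zero_mul]; exact zero_mem _
      rw [eq_neg_of_add_eq_zero_left h0]
      exact neg_mem hrest
  ext m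
  rw [map_zero]
  have := key N m
  rwa [hN, Ideal.mem_bot] at this

/-- Weierstrass division consequence: `q·A[[t]] ∩ A[t] = q·A[t]`. -/
lemma dvd_of_coe_dvd {A : Type*} [CommRing A] [Nontrivial A] {I : Ideal A} {N : ℕ}
    (hN : I ^ N = ⊥) {q : Polynomial A} {D : ℕ} (hm : q.Monic) (hd : q.natDegree = D)
    (hlow : ∀ i < D, q.coeff i ∈ I) {p : Polynomial A}
    (hdvd : (q : PowerSeries A) ∣ (p : PowerSeries A)) : q ∣ p := by
  obtain ⟨h, hp⟩ := hdvd
  have hdiv : p %ₘ q + q * (p /ₘ q) = p := p.modByMonic_add_div q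
  have hrd : (p %ₘ q).degree < (D : ℕ) := by
    have := Polynomial.degree_modByMonic_lt p hm
    rwa [Polynomial.degree_eq_natDegree hm.ne_zero, hd] at this
  have heq2 : (q : PowerSeries A) * (h - ((p /ₘ q : Polynomial A) : PowerSeries A))
      = ((p %ₘ q : Polynomial A) : PowerSeries A) := by
    have : ((p %ₘ q : Polynomial A) : PowerSeries A)
        = (p : PowerSeries A) - ((q * (p /ₘ q) : Polynomial A) : PowerSeries A) := by
      rw [← Polynomial.coe_sub]; exact congrArg _ (eq_sub_of_add_eq hdiv)
    rw [this, Polynomial.coe_mul, hp]; ring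
  have hz := weier_mul_eq_small_poly hN hm hd hlow hrd heq2
  have : h = ((p /ₘ q : Polynomial A) : PowerSeries A) := by
    have := sub_eq_zero.mp hz; exact this
  rw [this, ← Polynomial.coe_mul] at hp
  exact ⟨p /ₘ q, Polynomial.coe_injective A hp⟩

lemma aeval_sub_aeval_mem {k S σ : Type*} [CommRing k] [CommRing S] [Algebra k S]
    (I : Ideal S) (g : MvPolynomial σ k) (v w : σ → S)
    (hvw : ∀ s, v s - w s ∈ I) : aeval v g - aeval w g ∈ I := by
  let π := Ideal.Quotient.mkₐ k I
  have hcomp : ∀ u : σ → S, π (aeval u g) = aeval (fun s => π (u s)) g := fun u =>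
    MvPolynomial.comp_aeval_apply (f := u) π g
  have hvweq : (fun s => π (v s)) = fun s => π (w s) := by
    funext s
    exact (Ideal.Quotient.mk_eq_mk_iff_sub_mem _ _).mpr (hvw s)
  have : π (aeval v g - aeval w g) = 0 := by
    rw [map_sub, hcomp, hcomp, hvweq, sub_self]
  exact (Ideal.Quotient.eq_zero_iff_mem).mp this

lemma taylor_order_one {k S σ : Type*} [CommRing k] [CommRing S] [Algebra k S]
    [Fintype σ] [DecidableEq σ] (g : MvPolynomial σ k) (v w : σ → S)
    (I : Ideal S) (hvw : ∀ s, v s - w s ∈ I) :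
    aeval v g - aeval w g - ∑ s : σ, aeval w (pderiv s g) * (v s - w s) ∈ I ^ 2 := by
  induction g using MvPolynomial.induction_on with
  | C a => simp
  | add p r hp hr =>
    have hsplit :
        aeval v (p + r) - aeval w (p + r)
            - ∑ s : σ, aeval w (pderiv s (p + r)) * (v s - w s)
          = (aeval v p - aeval w p - ∑ s : σ, aeval w (pderiv s p) * (v s - w s))
            + (aeval v r - aeval w r - ∑ s : σ, aeval w (pderiv s r) * (v s - w s)) := by
      simp only [map_add, add_mul, Finset.sum_add_distrib]
      ring
    rw [hsplit]
    exact add_mem hp hr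
  | mul_X p s₀ hp =>
    have hder : ∀ s : σ, aeval w (pderiv s (p * X s₀))
        = aeval w (pderiv s p) * w s₀ + if s = s₀ then aeval w p else 0 := by
      intro s
      rw [pderiv_mul, pderiv_X]
      rcases eq_or_ne s s₀ with h | h
      · subst h; simp
      · simp [Pi.single_apply, h]
    have hsum : ∑ s : σ, aeval w (pderiv s (p * X s₀)) * (v s - w s)
        = (∑ s : σ, aeval w (pderiv s p) * (v s - w s)) * w s₀
          + aeval w p * (v s₀ - w s₀) := by
      simp only [hder, add_mul, Finset.sum_add_distrib, ite_mul, zero_mul]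
      rw [Finset.sum_ite_eq' Finset.univ s₀ (fun s => aeval w p * (v s - w s))]
      rw [Finset.sum_mul]
      simp only [Finset.mem_univ, if_true]
      congr 1
      exact Finset.sum_congr rfl fun s _ => by ring
    have hkey : MvPolynomial.aeval v (p * X s₀) - MvPolynomial.aeval w (p * X s₀)
          - ∑ s : σ, MvPolynomial.aeval w (pderiv s (p * X s₀)) * (v s - w s)
        = w s₀ * (MvPolynomial.aeval v p - MvPolynomial.aeval w p
            - ∑ s : σ, MvPolynomial.aeval w (pderiv s p) * (v s - w s))
          + (v s₀ - w s₀) * (MvPolynomial.aeval v p - MvPolynomial.aeval w p) := by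
      rw [hsum]
      simp only [map_mul, MvPolynomial.aeval_X]
      ring
    rw [hkey]
    rw [sq] at hp ⊢
    exact add_mem (Ideal.mul_mem_left _ _ hp)
      (Ideal.mul_mem_mul (hvw s₀) (aeval_sub_aeval_mem I p v w hvw))

/-- Coercion `A[X] → A⟦X⟧` as a `k`-algebra homomorphism. -/
def polyToPS (k A : Type*) [CommSemiring k] [CommSemiring A] [Algebra k A] :
    Polynomial A →ₐ[k] PowerSeries A :=
  { Polynomial.coeToPowerSeries.ringHom with
    commutes' := fun c => by
      show ((algebraMap k (Polynomial A) c : Polynomial A) : PowerSeries A) = _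
      rw [Polynomial.algebraMap_apply, Polynomial.coe_C, PowerSeries.algebraMap_apply] }

@[simp] lemma polyToPS_apply {k A : Type*} [CommSemiring k] [CommSemiring A] [Algebra k A]
    (p : Polynomial A) : polyToPS k A p = (p : PowerSeries A) := rfl


/-- Let `f = (f₁,…,f_M) ∈ k[x₁,…,x_n,y₁,…,y_M]^M`, `Df = (∂fᵢ/∂yⱼ)` and `δ = det Df`.
Let `(A, m)` be a local `k`-algebra with `m` nilpotent and `x(t), y(t)` tuples of power
series satisfying `f(x(t),y(t)) = 0` and `δ(x(t),y(t)) = q(t)·u(t)` with `q` a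
Weierstrass polynomial of degree `d` and `u` a unit. Writing `y = ȳ + q·θ` (`deg ȳ < d`)
and `x = x̄ + q²·ξ` (`deg x̄ < 2d`), one has `δ(x̄,ȳ) ∈ q·A[t]` and
`Ad(Df(x̄,ȳ))·f(x̄,ȳ) ∈ q²·A[t]^M`, where `Ad` is the adjugate matrix. -/
theorem formal_model_equations {k : Type*} [Field k]
    {n M : ℕ} (f : Fin M → MvPolynomial (Fin n ⊕ Fin M) k)
    {A : Type*} [CommRing A] [IsLocalRing A] [Algebra k A]
    (hnilp : ∃ N : ℕ, (maximalIdeal A) ^ N = ⊥)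
    (x : Fin n → PowerSeries A) (y : Fin M → PowerSeries A)
    (hf : ∀ i, aeval (Sum.elim x y) (f i) = 0)
    {d : ℕ} (q : Polynomial A) (hq : IsWeierstrassPolynomial q d)
    (u : PowerSeries A) (hu : IsUnit u)
    (hδ : aeval (Sum.elim x y)
        (Matrix.det (Matrix.of fun i j => pderiv (Sum.inr j) (f i))) =
      (q : PowerSeries A) * u)
    (xbar : Fin n → Polynomial A) (hxdeg : ∀ i, (xbar i).degree < (2 * d : ℕ))
    (ξ : Fin n → PowerSeries A)
    (hx : ∀ i, x i = (xbar i : PowerSeries A) + (q : PowerSeries A) ^ 2 * ξ i)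
    (ybar : Fin M → Polynomial A) (hydeg : ∀ j, (ybar j).degree < (d : ℕ))
    (θ : Fin M → PowerSeries A)
    (hy : ∀ j, y j = (ybar j : PowerSeries A) + (q : PowerSeries A) * θ j) :
    aeval (Sum.elim xbar ybar)
        (Matrix.det (Matrix.of fun i j => pderiv (Sum.inr j) (f i)))
      ∈ Ideal.span {q} ∧
    ∀ i, (Matrix.of fun i j => aeval (Sum.elim xbar ybar)
            (pderiv (Sum.inr j) (f i))).adjugate.mulVec
          (fun j => aeval (Sum.elim xbar ybar) (f j)) i
        ∈ Ideal.span {q ^ 2} := by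
  
  obtain ⟨N, hN⟩ := hnilp
  obtain ⟨hmon, hdeg, hlow⟩ := hq
  rcases subsingleton_or_nontrivial A with hA | hA
  · have triv : ∀ (p : Polynomial A) (J : Ideal (Polynomial A)), p ∈ J := fun p J => by
      rw [Subsingleton.elim p 0]; exact J.zero_mem
    exact ⟨triv _ _, fun i => triv _ _⟩
  -- notation
  set δpoly : MvPolynomial (Fin n ⊕ Fin M) k :=
    Matrix.det (Matrix.of fun i j => pderiv (Sum.inr j) (f i)) with hδpoly
  set v : (Fin n ⊕ Fin M) → PowerSeries A := Sum.elim x y with hv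
  set w : (Fin n ⊕ Fin M) → PowerSeries A :=
    Sum.elim (fun i => ((xbar i : Polynomial A) : PowerSeries A))
      (fun j => ((ybar j : Polynomial A) : PowerSeries A)) with hw
  have hTw : ∀ g : MvPolynomial (Fin n ⊕ Fin M) k,
      ((aeval (Sum.elim xbar ybar) g : Polynomial A) : PowerSeries A) = aeval w g := by
    intro g
    have h1 := MvPolynomial.comp_aeval_apply (f := Sum.elim xbar ybar) (polyToPS k A) g
    have h2 : (fun s : Fin n ⊕ Fin M => polyToPS k A (Sum.elim xbar ybar s)) = w := by
      funext s; cases s <;> rfl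
    rw [polyToPS_apply] at h1
    rw [h1, h2]
  have hvwq : ∀ s, v s - w s ∈ Ideal.span {(q : PowerSeries A)} := by
    rintro (i | j)
    · refine Ideal.mem_span_singleton.mpr ⟨(q : PowerSeries A) * ξ i, ?_⟩
      simp only [hv, hw, Sum.elim_inl, hx i]; ring
    · refine Ideal.mem_span_singleton.mpr ⟨θ j, ?_⟩
      simp only [hv, hw, Sum.elim_inr, hy j]; ring
  -- δ(x̄,ȳ) ∈ (q) in the power series ring
  have hδw : aeval w δpoly ∈ Ideal.span {(q : PowerSeries A)} := by
    have h1 := aeval_sub_aeval_mem (Ideal.span {(q : PowerSeries A)}) δpoly v w hvwq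
    have h2 : aeval v δpoly ∈ Ideal.span {(q : PowerSeries A)} := by
      rw [hδ]; exact Ideal.mem_span_singleton.mpr ⟨u, rfl⟩
    have := sub_mem h2 h1
    simpa using this
  have part1 : aeval (Sum.elim xbar ybar) δpoly ∈ Ideal.span {q} := by
    refine Ideal.mem_span_singleton.mpr ?_
    refine dvd_of_coe_dvd hN hmon hdeg hlow ?_
    rw [hTw]
    exact Ideal.mem_span_singleton.mp hδw
  refine ⟨part1, ?_⟩
  -- part 2
  set Dw : Matrix (Fin M) (Fin M) (PowerSeries A) :=
    Matrix.of fun i j => aeval w (pderiv (Sum.inr j) (f i)) with hDw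
  set Fw : Fin M → PowerSeries A := fun j => aeval w (f j) with hFw
  have hdetDw : Dw.det ∈ Ideal.span {(q : PowerSeries A)} := by
    have : Dw.det = aeval w δpoly := by
      rw [hδpoly, AlgHom.map_det]
      rfl
    rw [this]; exact hδw
  -- Taylor estimate
  have key : ∀ j, Fw j + (q : PowerSeries A) * (Dw.mulVec θ) j
      ∈ Ideal.span {(q : PowerSeries A) ^ 2} := by
    intro j
    have ht := taylor_order_one (f j) v w (Ideal.span {(q : PowerSeries A)}) hvwq
    rw [Ideal.span_singleton_pow] at ht
    rw [hf j, Fintype.sum_sum_type] at ht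
    have hxterm : ∑ l : Fin n, aeval w (pderiv (Sum.inl l) (f j)) * (v (Sum.inl l) - w (Sum.inl l))
        ∈ Ideal.span {(q : PowerSeries A) ^ 2} := by
      apply Ideal.sum_mem
      intro l _
      have : v (Sum.inl l) - w (Sum.inl l) = (q : PowerSeries A) ^ 2 * ξ l := by
        simp only [hv, hw, Sum.elim_inl, hx l]; ring
      rw [this]
      exact Ideal.mem_span_singleton.mpr
        ⟨aeval w (pderiv (Sum.inl l) (f j)) * ξ l, by ring⟩
    have hyterm : ∀ l : Fin M, v (Sum.inr l) - w (Sum.inr l) = (q : PowerSeries A) * θ l := by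
      intro l; simp only [hv, hw, Sum.elim_inr, hy l]; ring
    have hsum2 : ∑ l : Fin M, aeval w (pderiv (Sum.inr l) (f j)) * (v (Sum.inr l) - w (Sum.inr l))
        = (q : PowerSeries A) * (Dw.mulVec θ) j := by
      simp only [hyterm, Matrix.mulVec, dotProduct, hDw, Matrix.of_apply, Finset.mul_sum]
      exact Finset.sum_congr rfl fun l _ => by ring
    have hexpr : Fw j + (q : PowerSeries A) * (Dw.mulVec θ) j
        = -(0 - aeval w (f j)
            - (∑ l : Fin n, aeval w (pderiv (Sum.inl l) (f j)) * (v (Sum.inl l) - w (Sum.inl l))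
              + ∑ l : Fin M, aeval w (pderiv (Sum.inr l) (f j)) * (v (Sum.inr l) - w (Sum.inr l))))
          - ∑ l : Fin n, aeval w (pderiv (Sum.inl l) (f j)) * (v (Sum.inl l) - w (Sum.inl l)) := by
      simp only [hFw]
      rw [hsum2]
      ring
    rw [hexpr]
    exact sub_mem (neg_mem ht) hxterm
  -- conclude
  intro i
  set Mx : Matrix (Fin M) (Fin M) (Polynomial A) :=
    Matrix.of fun i j => aeval (Sum.elim xbar ybar) (pderiv (Sum.inr j) (f i)) with hMx
  refine Ideal.mem_span_singleton.mpr ?_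
  have hmon2 : (q ^ 2).Monic := hmon.pow 2
  have hdeg2 : (q ^ 2).natDegree = 2 * d := by
    rw [Polynomial.Monic.natDegree_pow hmon, hdeg]
  have hlow2 : ∀ i < 2 * d, (q ^ 2).coeff i ∈ maximalIdeal A := by
    intro i hi
    rw [sq, Polynomial.coeff_mul]
    apply Ideal.sum_mem
    intro p hp
    rw [Finset.HasAntidiagonal.mem_antidiagonal] at hp
    rcases lt_or_ge p.1 d with h1 | h1
    · exact Ideal.mul_mem_right _ _ (hlow p.1 h1)
    · exact Ideal.mul_mem_left _ _ (hlow p.2 (by omega))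
  refine dvd_of_coe_dvd hN hmon2 hdeg2 hlow2 ?_
  -- identify the coercion of the entry with the power series computation
  have hmap : Mx.map (⇑(polyToPS k A)) = Dw := by
    ext a b
    simp only [hMx, Matrix.map_apply, Matrix.of_apply, hDw]
    rw [polyToPS_apply, hTw]
  have hcoe : ((Mx.adjugate.mulVec
        (fun j => aeval (Sum.elim xbar ybar) (f j)) i : Polynomial A) : PowerSeries A)
      = (Dw.adjugate.mulVec Fw) i := by
    simp only [Matrix.mulVec, dotProduct]
    rw [← polyToPS_apply (k := k), map_sum]
    apply Finset.sum_congr rfl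
    intro j _
    rw [map_mul]
    congr 1
    · have hadj := AlgHom.map_adjugate (polyToPS k A) Mx
      rw [AlgHom.mapMatrix_apply, AlgHom.mapMatrix_apply] at hadj
      have h3 : (Mx.adjugate.map ⇑(polyToPS k A)) i j
          = (Mx.map ⇑(polyToPS k A)).adjugate i j := by rw [hadj]
      rw [hmap] at h3
      exact h3
    · rw [polyToPS_apply, hTw]
  rw [Polynomial.coe_pow, hcoe]
  rw [← Ideal.mem_span_singleton]
  -- final computation in A⟦X⟧
  have hsplit : (Dw.adjugate.mulVec Fw) i
      = (∑ j, Dw.adjugate i j * (Fw j + (q : PowerSeries A) * (Dw.mulVec θ) j))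
        - (q : PowerSeries A) * (Dw.adjugate.mulVec (Dw.mulVec θ)) i := by
    simp only [Matrix.mulVec, dotProduct]
    rw [Finset.mul_sum, ← Finset.sum_sub_distrib]
    apply Finset.sum_congr rfl
    intro j _
    ring
  rw [hsplit]
  refine sub_mem (Ideal.sum_mem _ fun j _ => Ideal.mul_mem_left _ _ (key j)) ?_
  have hadjmul : Dw.adjugate.mulVec (Dw.mulVec θ) = fun l => Dw.det * θ l := by
    rw [Matrix.mulVec_mulVec, Matrix.adjugate_mul]
    funext l
    rw [Matrix.smul_mulVec, Matrix.one_mulVec]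
    rfl
  rw [hadjmul]
  obtain ⟨c, hc⟩ := Ideal.mem_span_singleton.mp hdetDw
  refine Ideal.mem_span_singleton.mpr ⟨c * θ i, ?_⟩
  rw [hc]; ring
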